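/- Let $V$ be a Banach space and let $v, w \in V$ be unit vectors. For every $r \in [0,1]$ there exists a continuous linear functional $\sigma$ on $V$ with $\|\sigma\| \le 1$, $\mathrm{Re}\,\sigma(v) \ge r$, and $|\sigma(w)| \ge (1-r)/3$. -/

import Mathlib

set_option maxHeartbeats 1000000
set_option synthInstance.maxHeartbeats 400000

/-- Let $V$ be a complex Banach space and $v, w \in V$ unit vectors. For every
$r \in [0,1]$ there exists a continuous linear functional $\sigma$ on $V$ with
$\|\sigma\| \le 1$, $\mathrm{Re}\,\sigma(v) \ge r$, and $|\sigma(w)| \ge (1-r)/3$. -/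
theorem stmt_0 (V : Type*) [NormedAddCommGroup V] [NormedSpace ℂ V] [CompleteSpace V]
    (v w : V) (hv : ‖v‖ = 1) (hw : ‖w‖ = 1) (r : ℝ) (hr : r ∈ Set.Icc (0 : ℝ) 1) :
    ∃ σ : V →L[ℂ] ℂ, ‖σ‖ ≤ 1 ∧ r ≤ (σ v).re ∧ (1 - r) / 3 ≤ ‖σ w‖ := by
  obtain ⟨hr0, hr1⟩ := hr
  have hv0 : v ≠ 0 := by
    intro h; rw [h, norm_zero] at hv; linarith
  have hw0 : w ≠ 0 := by
    intro h; rw [h, norm_zero] at hw; linarith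
  obtain ⟨f, hf, hfv⟩ := exists_dual_vector ℂ v (norm_ne_zero_iff.mpr hv0)
  obtain ⟨g, hg, hgw⟩ := exists_dual_vector ℂ w (norm_ne_zero_iff.mpr hw0)
  have hfv1 : f v = 1 := by rw [hfv, hv]; simp
  have hgw1 : g w = 1 := by rw [hgw, hw]; simp
  by_cases hcase : (1 - r) / 3 ≤ ‖f w‖
  · exact ⟨f, le_of_eq hf, by rw [hfv1]; simpa using hr1, hcase⟩
  · push_neg at hcase
    set c : ℂ := g v with hc
    set α : ℂ := if c = 0 then 1 else (starRingEnd ℂ) c / (‖c‖ : ℂ) with hα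
    have hαnorm : ‖α‖ = 1 := by
      rw [hα]; split_ifs with h
      · simp
      · rw [norm_div, RCLike.norm_conj]
        simp only [Complex.norm_real, Real.norm_eq_abs, abs_of_nonneg (norm_nonneg c)]
        exact div_self (norm_ne_zero_iff.mpr h)
    have hαc : α * c = (‖c‖ : ℂ) := by
      rw [hα]; split_ifs with h
      · simp [h]
      · have hcabs : ((‖c‖ : ℝ) : ℂ) ≠ 0 := by
          exact_mod_cast norm_ne_zero_iff.mpr h
        rw [div_mul_eq_mul_div, Complex.conj_mul', sq, mul_div_assoc,
          div_self hcabs, mul_one]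
    refine ⟨(r : ℂ) • f + (((1 - r : ℝ) : ℂ) * α) • g, ?_, ?_, ?_⟩
    · calc ‖(r : ℂ) • f + (((1 - r : ℝ) : ℂ) * α) • g‖
          ≤ ‖(r : ℂ) • f‖ + ‖(((1 - r : ℝ) : ℂ) * α) • g‖ := norm_add_le _ _
        _ = r * 1 + (1 - r) * 1 := by
            rw [norm_smul (r : ℂ) f, norm_smul (((1 - r : ℝ) : ℂ) * α) g,
              norm_mul, hαnorm, hf, hg,
              Complex.norm_real, Complex.norm_real, Real.norm_eq_abs,
              Real.norm_eq_abs, abs_of_nonneg hr0,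
              abs_of_nonneg (by linarith : (0:ℝ) ≤ 1 - r)]
            ring
        _ = 1 := by ring
    · have heval : ((r : ℂ) • f + (((1 - r : ℝ) : ℂ) * α) • g) v
          = (r : ℂ) + ((1 - r : ℝ) : ℂ) * (‖c‖ : ℂ) := by
        simp only [ContinuousLinearMap.add_apply, ContinuousLinearMap.coe_smul',
          Pi.smul_apply, smul_eq_mul, hfv1, mul_one, ← hc, mul_assoc, hαc]
      rw [heval]
      have hcnn : (0:ℝ) ≤ ‖c‖ := norm_nonneg _
      simp only [Complex.add_re, Complex.mul_re, Complex.ofReal_re, Complex.ofReal_im]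
      nlinarith
    · have heval : ((r : ℂ) • f + (((1 - r : ℝ) : ℂ) * α) • g) w
          = (((1 - r : ℝ) : ℂ) * α) + (r : ℂ) * f w := by
        simp only [ContinuousLinearMap.add_apply, ContinuousLinearMap.coe_smul',
          Pi.smul_apply, smul_eq_mul, hgw1, mul_one]
        ring
      rw [heval]
      have haux : ‖(((1 - r : ℝ) : ℂ) * α)‖
          ≤ ‖(((1 - r : ℝ) : ℂ) * α) + (r : ℂ) * f w‖ + ‖(r : ℂ) * f w‖ := by
        simpa using norm_add_le ((((1 - r : ℝ) : ℂ) * α) + (r : ℂ) * f w) (-((r : ℂ) * f w))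
      have h2 : ‖(((1 - r : ℝ) : ℂ) * α)‖ = 1 - r := by
        rw [norm_mul, hαnorm, mul_one, Complex.norm_real, Real.norm_eq_abs,
          abs_of_nonneg (by linarith : (0:ℝ) ≤ 1 - r)]
      have h3 : ‖(r : ℂ) * f w‖ ≤ (1 - r) / 3 := by
        rw [norm_mul, Complex.norm_real, Real.norm_eq_abs, abs_of_nonneg hr0]
        nlinarith [norm_nonneg (f w)]
      linarith
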